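/- Let Σ ∈ ℝ^{(T+1)n_x×(T+1)n_x} be block-lower-triangular and invertible, and let K ∈ ℝ^{(T+1)n_u×(T+1)n_x} be block-lower-triangular. Then Z(𝒜 + ℬK) is nilpotent (indeed (Z(𝒜+ℬK))^{T+1} = 0), so I − Z(𝒜 + ℬK) is invertible; moreover the matrices Φ̃x := (I − Z(𝒜+ℬK))^{-1}Σ and Φ̃u := KΦ̃x are block-lower-triangular and satisfy (I − Z𝒜)Φ̃x − ZℬΦ̃u = Σ. -/

import Mathlib

open Matrix Finset

noncomputable section

/-- A `(T+1)×(T+1)`-block matrix (with `p×q` blocks) is block-lower-triangular if its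
`(i,j)` block vanishes whenever `j > i`. -/
def IsBLT {T p q : ℕ} (M : Matrix (Fin (T+1) × Fin p) (Fin (T+1) × Fin q) ℝ) : Prop :=
  ∀ (i j : Fin (T+1)) (a : Fin p) (b : Fin q), i < j → M (i, a) (j, b) = 0

/-- The block-downshift matrix `Z`: its `(i,j)` block is the identity if `i = j+1`,
and zero otherwise. -/
def dshift (T n : ℕ) : Matrix (Fin (T+1) × Fin n) (Fin (T+1) × Fin n) ℝ :=
  Matrix.of fun i j => if ((i.1 : ℕ) = (j.1 : ℕ) + 1 ∧ i.2 = j.2) then (1 : ℝ) else 0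

/-- `blkdiag(M, …, M, 0)`: `T` copies of `M` on the block diagonal followed by one zero block. -/
def blkDiag {p q : ℕ} (T : ℕ) (M : Matrix (Fin p) (Fin q) ℝ) :
    Matrix (Fin (T+1) × Fin p) (Fin (T+1) × Fin q) ℝ :=
  Matrix.of fun i j => if (i.1 = j.1 ∧ (i.1 : ℕ) < T) then M i.2 j.2 else 0

/-- Strictly block-lower-triangular: `(i,j)` block vanishes whenever `i ≤ j`. -/
def IsSBLT {T p q : ℕ} (M : Matrix (Fin (T+1) × Fin p) (Fin (T+1) × Fin q) ℝ) : Prop :=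
  ∀ (i j : Fin (T+1)) (a : Fin p) (b : Fin q), i ≤ j → M (i, a) (j, b) = 0

lemma IsSBLT.isBLT {T p q : ℕ} {M : Matrix (Fin (T+1) × Fin p) (Fin (T+1) × Fin q) ℝ}
    (h : IsSBLT M) : IsBLT M := fun i j a b hij => h i j a b hij.le

lemma IsBLT.mul {T p q r : ℕ} {M : Matrix (Fin (T+1) × Fin p) (Fin (T+1) × Fin q) ℝ}
    {N : Matrix (Fin (T+1) × Fin q) (Fin (T+1) × Fin r) ℝ}
    (hM : IsBLT M) (hN : IsBLT N) : IsBLT (M * N) := by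
  intro i j a b hij
  rw [Matrix.mul_apply]
  apply Finset.sum_eq_zero
  rintro ⟨k, c⟩ -
  rcases lt_or_ge i k with h | h
  · rw [hM i k a c h, zero_mul]
  · rw [hN k j c b (lt_of_le_of_lt h hij), mul_zero]

lemma IsSBLT.mul {T p q r : ℕ} {M : Matrix (Fin (T+1) × Fin p) (Fin (T+1) × Fin q) ℝ}
    {N : Matrix (Fin (T+1) × Fin q) (Fin (T+1) × Fin r) ℝ}
    (hM : IsSBLT M) (hN : IsBLT N) : IsSBLT (M * N) := by
  intro i j a b hij
  rw [Matrix.mul_apply]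
  apply Finset.sum_eq_zero
  rintro ⟨k, c⟩ -
  rcases le_or_gt i k with h | h
  · rw [hM i k a c h, zero_mul]
  · rw [hN k j c b (lt_of_lt_of_le h hij), mul_zero]

lemma isBLT_one {T p : ℕ} : IsBLT (1 : Matrix (Fin (T+1) × Fin p) (Fin (T+1) × Fin p) ℝ) := by
  intro i j a b hij
  apply Matrix.one_apply_ne
  intro h
  exact absurd (congrArg Prod.fst h) hij.ne

lemma isBLT_add {T p q : ℕ} {M N : Matrix (Fin (T+1) × Fin p) (Fin (T+1) × Fin q) ℝ}
    (hM : IsBLT M) (hN : IsBLT N) : IsBLT (M + N) := by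
  intro i j a b hij
  simp [Matrix.add_apply, hM i j a b hij, hN i j a b hij]

lemma isSBLT_dshift {T n : ℕ} : IsSBLT (dshift T n) := by
  intro i j a b hij
  simp only [dshift, Matrix.of_apply]
  rw [if_neg]
  rintro ⟨h, -⟩
  omega

lemma isBLT_blkDiag {T p q : ℕ} (M : Matrix (Fin p) (Fin q) ℝ) : IsBLT (blkDiag T M) := by
  intro i j a b hij
  simp only [blkDiag, Matrix.of_apply]
  rw [if_neg]
  rintro ⟨h, -⟩
  exact absurd h hij.ne

lemma sblt_pow_zero {T n : ℕ} {N : Matrix (Fin (T+1) × Fin n) (Fin (T+1) × Fin n) ℝ}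
    (hN : IsSBLT N) : ∀ (k : ℕ) (i j : Fin (T+1)) (a b : Fin n),
      (i : ℕ) < (j : ℕ) + k → (N ^ k) (i, a) (j, b) = 0 := by
  intro k
  induction k with
  | zero =>
    intro i j a b hij
    rw [pow_zero]
    apply Matrix.one_apply_ne
    intro h
    have := congrArg Prod.fst h
    simp only at this
    omega
  | succ k ih =>
    intro i j a b hij
    rw [pow_succ', Matrix.mul_apply]
    apply Finset.sum_eq_zero
    rintro ⟨l, c⟩ -
    rcases le_or_gt i l with h | h
    · rw [hN i l a c h, zero_mul]
    · rw [ih l j c b (by omega), mul_zero]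

theorem statement0 (nx nu T : ℕ) (hnx : 1 ≤ nx) (hnu : 1 ≤ nu) (hT : 1 ≤ T)
    (Ahat : Matrix (Fin nx) (Fin nx) ℝ) (Bhat : Matrix (Fin nx) (Fin nu) ℝ)
    (Sig : Matrix (Fin (T+1) × Fin nx) (Fin (T+1) × Fin nx) ℝ)
    (K : Matrix (Fin (T+1) × Fin nu) (Fin (T+1) × Fin nx) ℝ)
    (hSigBLT : IsBLT Sig) (hSig : IsUnit Sig) (hKBLT : IsBLT K) :
    (dshift T nx * (blkDiag T Ahat + blkDiag T Bhat * K)) ^ (T+1) = 0 ∧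
    IsUnit (1 - dshift T nx * (blkDiag T Ahat + blkDiag T Bhat * K)) ∧
    IsBLT ((1 - dshift T nx * (blkDiag T Ahat + blkDiag T Bhat * K))⁻¹ * Sig) ∧
    IsBLT (K * ((1 - dshift T nx * (blkDiag T Ahat + blkDiag T Bhat * K))⁻¹ * Sig)) ∧
    (1 - dshift T nx * blkDiag T Ahat) *
        ((1 - dshift T nx * (blkDiag T Ahat + blkDiag T Bhat * K))⁻¹ * Sig) -
      dshift T nx * blkDiag T Bhat *
        (K * ((1 - dshift T nx * (blkDiag T Ahat + blkDiag T Bhat * K))⁻¹ * Sig)) = Sig := by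
  set N := dshift T nx * (blkDiag T Ahat + blkDiag T Bhat * K) with hNdef
  have hNS : IsSBLT N :=
    isSBLT_dshift.mul (isBLT_add (isBLT_blkDiag _) ((isBLT_blkDiag _).mul hKBLT))
  have hnil : N ^ (T + 1) = 0 := by
    ext ⟨i, a⟩ ⟨j, b⟩
    rw [Matrix.zero_apply]
    exact sblt_pow_zero hNS (T + 1) i j a b (by omega)
  set S := ∑ k ∈ Finset.range (T + 1), N ^ k with hSdef
  have h1 : (1 - N) * S = 1 := by
    calc (1 - N) * S = -((N - 1) * S) := by noncomm_ring
    _ = -(N ^ (T + 1) - 1) := by rw [mul_geom_sum]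
    _ = 1 := by rw [hnil, zero_sub, neg_neg]
  have h2 : S * (1 - N) = 1 := by
    calc S * (1 - N) = -(S * (N - 1)) := by noncomm_ring
    _ = -(N ^ (T + 1) - 1) := by rw [geom_sum_mul]
    _ = 1 := by rw [hnil, zero_sub, neg_neg]
  have hUnit : IsUnit (1 - N) := ⟨⟨1 - N, S, h1, h2⟩, rfl⟩
  have hinv : (1 - N)⁻¹ = S := Matrix.inv_eq_right_inv h1
  have hSBLT : IsBLT S := by
    intro i j a b hij
    rw [hSdef, Matrix.sum_apply]
    apply Finset.sum_eq_zero
    rintro k -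
    have : IsBLT (N ^ k) := by
      induction k with
      | zero => rw [pow_zero]; exact isBLT_one
      | succ k ih => rw [pow_succ]; exact ih.mul hNS.isBLT
    exact this i j a b hij
  have hPhiX : IsBLT ((1 - N)⁻¹ * Sig) := by
    rw [hinv]; exact hSBLT.mul hSigBLT
  refine ⟨hnil, hUnit, hPhiX, hKBLT.mul hPhiX, ?_⟩
  have key : (1 - N) * ((1 - N)⁻¹ * Sig) = Sig := by
    rw [hinv, ← mul_assoc, h1, one_mul]
  have gen : ∀ P : Matrix (Fin (T+1) × Fin nx) (Fin (T+1) × Fin nx) ℝ,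
      (1 - dshift T nx * blkDiag T Ahat) * P - dshift T nx * blkDiag T Bhat * (K * P)
        = (1 - N) * P := by
    intro P
    rw [hNdef]
    simp only [Matrix.sub_mul, Matrix.one_mul, Matrix.mul_add, Matrix.add_mul, Matrix.mul_assoc]
    abel
  rw [gen, key]
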